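/- Let n ≥ t ≥ 1 and k₊ ≥ k₋ ≥ 0 be integers, let p be a prime with k₊ + k₋ + 1 = p, and let C be a linear code of length n over the field with p elements that is a perfect code of radius t (every vector of 𝔽ₚⁿ is within Hamming distance t of exactly one codeword of C). Then Λ = {x ∈ ℤⁿ : (x mod p) ∈ C} is an additive subgroup of ℤⁿ, and the error-ball B(n,t,k₊,k₋) tiles ℤⁿ by Λ. -/
import Mathlib


open Finset

/-- Hamming weight of an integer vector: the number of nonzero entries. -/
def wt {n : ℕ} (x : Fin n → ℤ) : ℕ := (Finset.univ.filter (fun i => x i ≠ 0)).card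

/-- The `(n,t,k₊,k₋)`-error-ball in `ℤⁿ`. -/
def errBall (n t : ℕ) (kp km : ℤ) : Set (Fin n → ℤ) :=
  {x | (∀ i, -km ≤ x i ∧ x i ≤ kp) ∧ wt x ≤ t}

/-- `Tiles B T` : every `z ∈ ℤⁿ` is uniquely `z = v + b` with `v ∈ T` and `b ∈ B`. -/
def Tiles {n : ℕ} (B T : Set (Fin n → ℤ)) : Prop :=
  ∀ z : Fin n → ℤ, ∃! p : (Fin n → ℤ) × (Fin n → ℤ),
    p.1 ∈ T ∧ p.2 ∈ B ∧ z = p.1 + p.2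

theorem stmt_2 (n t : ℕ) (kp km : ℤ) (ht : 1 ≤ t) (htn : t ≤ n)
    (hkm : 0 ≤ km) (hkp : km ≤ kp)
    (p : ℕ) (hp : p.Prime) (hsum : kp + km + 1 = (p : ℤ))
    (C : Submodule (ZMod p) (Fin n → ZMod p))
    (hperfect : ∀ y : Fin n → ZMod p, ∃! c : Fin n → ZMod p,
      c ∈ C ∧ hammingDist y c ≤ t) :
    ∃ Λ : AddSubgroup (Fin n → ℤ),
      (Λ : Set (Fin n → ℤ)) = {x : Fin n → ℤ | (fun i => ((x i : ZMod p))) ∈ C} ∧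
      Tiles (errBall n t kp km) (Λ : Set (Fin n → ℤ)) := by
  haveI : Fact p.Prime := ⟨hp⟩
  haveI : NeZero p := ⟨hp.ne_zero⟩
  -- injectivity of reduction on the interval [-km, kp]
  have inj : ∀ a b : ℤ, -km ≤ a → a ≤ kp → -km ≤ b → b ≤ kp →
      ((a : ZMod p) = (b : ZMod p)) → a = b := by
    intro a b ha1 ha2 hb1 hb2 hab
    have hd : (p : ℤ) ∣ b - a := (ZMod.intCast_eq_intCast_iff_dvd_sub a b p).mp hab
    obtain ⟨k, hk⟩ := hd
    have hkbound : b - a = p * k := hk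
    have hk0 : k = 0 := by nlinarith [hp.pos]
    rw [hk0, mul_zero] at hkbound
    omega
  -- the representative function
  set rep : ZMod p → ℤ := fun r => if (r.val : ℤ) ≤ kp then (r.val : ℤ) else (r.val : ℤ) - p
    with hrep
  have repbound : ∀ r : ZMod p, -km ≤ rep r ∧ rep r ≤ kp := by
    intro r
    have h1 : (r.val : ℤ) < p := by exact_mod_cast r.val_lt
    have h0 : (0 : ℤ) ≤ (r.val : ℤ) := Int.natCast_nonneg _
    simp only [hrep]
    split <;> omega
  have repcast : ∀ r : ZMod p, ((rep r : ℤ) : ZMod p) = r := by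
    intro r
    simp only [hrep]
    split <;> push_cast <;> simp [ZMod.natCast_val, ZMod.cast_id, ZMod.natCast_self]
  have repzero : ∀ a : ℤ, -km ≤ a → a ≤ kp → ((a : ZMod p) = 0 ↔ a = 0) := by
    intro a h1 h2
    constructor
    · intro h
      exact inj a 0 h1 h2 (by omega) (by omega) (by simpa using h)
    · rintro rfl; simp
  -- the lattice
  let f : (Fin n → ℤ) →+ (Fin n → ZMod p) :=
    { toFun := fun x i => ((x i : ZMod p))
      map_zero' := by funext i; simp
      map_add' := by intro a b; funext i; push_cast; simp }
  refine ⟨AddSubgroup.comap f C.toAddSubgroup, rfl, ?_⟩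
  intro z
  set y : Fin n → ZMod p := fun i => ((z i : ZMod p)) with hy
  obtain ⟨c, ⟨hcC, hcd⟩, hcu⟩ := hperfect y
  set b : Fin n → ℤ := fun i => rep (y i - c i) with hb
  set v : Fin n → ℤ := z - b with hv
  have hfb : ∀ i, ((b i : ZMod p)) = y i - c i := fun i => repcast _
  have hfv : f v = c := by
    funext i
    show ((v i : ZMod p)) = c i
    have hvi : v i = z i - b i := rfl
    calc ((v i : ZMod p)) = ((z i : ZMod p)) - ((b i : ZMod p)) := by rw [hvi]; push_cast; ring
      _ = y i - (y i - c i) := by rw [hfb i]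
      _ = c i := by ring
  refine ⟨(v, b), ⟨?_, ?_, ?_⟩, ?_⟩
  · show f v ∈ C
    rw [hfv]; exact hcC
  · refine ⟨fun i => repbound _, ?_⟩
    have : wt b = hammingDist y c := by
      unfold wt hammingDist
      congr 1
      apply Finset.filter_congr
      intro i _
      have h1 := (repbound (y i - c i)).1
      have h2 := (repbound (y i - c i)).2
      have hiff : b i = 0 ↔ y i = c i := by
        constructor
        · intro h
          have h3 := hfb i
          rw [h] at h3
          exact (sub_eq_zero.mp (by simpa using h3.symm))
        · intro h
          exact (repzero _ h1 h2).mp (by rw [hfb i, h, sub_self])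
      exact not_congr hiff
    rw [this]; exact hcd
  · funext i; show z i = (z i - b i) + b i; ring
  · rintro ⟨v', b'⟩ ⟨hv', hb', hz'⟩
    have hbint : ∀ i, -km ≤ b' i ∧ b' i ≤ kp := hb'.1
    have hfv' : f v' ∈ C := hv'
    have hb'cast : ∀ i, ((b' i : ZMod p)) = y i - f v' i := by
      intro i
      have : z i = v' i + b' i := congrFun hz' i
      show ((b' i : ZMod p)) = ((z i : ZMod p)) - ((v' i : ZMod p))
      rw [this]; push_cast; ring
    have hdist : hammingDist y (f v') = wt b' := by
      unfold wt hammingDist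
      congr 1
      apply Finset.filter_congr
      intro i _
      have hiff : b' i = 0 ↔ y i = f v' i := by
        constructor
        · intro h
          have h3 := hb'cast i
          rw [h] at h3
          exact (sub_eq_zero.mp (by simpa using h3.symm))
        · intro h
          exact (repzero _ (hbint i).1 (hbint i).2).mp (by rw [hb'cast i, h, sub_self])
      exact (not_congr hiff).symm
    have hvc : f v' = c := hcu (f v') ⟨hfv', by rw [hdist]; exact hb'.2⟩
    have hbb : b' = b := by
      funext i
      apply inj _ _ (hbint i).1 (hbint i).2 (repbound _).1 (repbound _).2
      rw [hb'cast i, hfb i, hvc]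
    have hvv : v' = v := by
      funext i
      have : z i = v' i + b' i := congrFun hz' i
      have hbi : b' i = b i := congrFun hbb i
      show v' i = z i - b i
      omega
    exact Prod.ext hvv hbb
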